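/- Fix k ≥ 2 and let λ̄_k = inf_{q∈(0,1)} √( −(k/(2 q^k)) log(1−q²) ). Define G_λ : [−1,1]^k → ℝ ∪ {−∞} by G_λ(q₁,…,q_k) = λ² Π_{i=1}^k q_i + (1/2) Σ_{i=1}^k log(1 − q_i²). If 0 ≤ λ < λ̄_k, then max over [−1,1]^k of G_λ equals 0, and the maximum is attained uniquely at q = (0,…,0). -/

import Mathlib

open MeasureTheory ProbabilityTheory Filter
open scoped ENNReal

noncomputable section

/-- The asymmetric second-moment threshold `λ̄_k = inf_{q∈(0,1)} √(−(k/(2q^k)) log(1−q²))`. -/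
def lambdaBar (k : ℕ) : ℝ :=
  sInf {x : ℝ | ∃ q ∈ Set.Ioo (0 : ℝ) 1,
    x = Real.sqrt (-((k : ℝ) / (2 * q ^ k)) * Real.log (1 - q ^ 2))}

open scoped Classical in
/-- `G_λ(q₁,…,q_k) = λ² Π q_i + (1/2) Σ log(1−q_i²)`, with the convention `log 0 = −∞`. -/
def Gasym (k : ℕ) (lam : ℝ) (q : Fin k → ℝ) : EReal :=
  if ∀ i, 0 < 1 - q i ^ 2 then
    ((lam ^ 2 * ∏ i, q i + 1 / 2 * ∑ i, Real.log (1 - q i ^ 2) : ℝ) : EReal)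
  else ⊥

private lemma key_term (k : ℕ) (lam : ℝ) (hlam0 : 0 ≤ lam)
    (hlam : lam < lambdaBar k) {t : ℝ} (ht0 : 0 < t) (ht1 : t < 1) :
    lam ^ 2 * t ^ k + (k : ℝ) / 2 * Real.log (1 - t ^ 2) < 0 := by
  have htk : (0:ℝ) < t ^ k := pow_pos ht0 k
  have ht2 : t ^ 2 < 1 := by nlinarith
  have hlog : Real.log (1 - t ^ 2) < 0 := Real.log_neg (by nlinarith) (by nlinarith)
  have hcoef : (0:ℝ) ≤ (k : ℝ) / (2 * t ^ k) := by positivity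
  have hinner : 0 ≤ -((k : ℝ) / (2 * t ^ k)) * Real.log (1 - t ^ 2) := by nlinarith
  have hmem : Real.sqrt (-((k : ℝ) / (2 * t ^ k)) * Real.log (1 - t ^ 2)) ∈
      {x : ℝ | ∃ q ∈ Set.Ioo (0 : ℝ) 1,
        x = Real.sqrt (-((k : ℝ) / (2 * q ^ k)) * Real.log (1 - q ^ 2))} :=
    ⟨t, ⟨ht0, ht1⟩, rfl⟩
  have hbdd : BddBelow {x : ℝ | ∃ q ∈ Set.Ioo (0 : ℝ) 1,
      x = Real.sqrt (-((k : ℝ) / (2 * q ^ k)) * Real.log (1 - q ^ 2))} := by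
    refine ⟨0, fun x hx => ?_⟩
    obtain ⟨q, _, rfl⟩ := hx
    exact Real.sqrt_nonneg _
  have hlt : lam < Real.sqrt (-((k : ℝ) / (2 * t ^ k)) * Real.log (1 - t ^ 2)) :=
    lt_of_lt_of_le hlam (csInf_le hbdd hmem)
  have h2 : lam ^ 2 < (Real.sqrt (-((k : ℝ) / (2 * t ^ k)) * Real.log (1 - t ^ 2))) ^ 2 :=
    pow_lt_pow_left₀ hlt hlam0 (by norm_num)
  rw [Real.sq_sqrt hinner] at h2
  have h3 : lam ^ 2 * t ^ k < (-((k : ℝ) / (2 * t ^ k)) * Real.log (1 - t ^ 2)) * t ^ k :=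
    mul_lt_mul_of_pos_right h2 htk
  have h4 : (-((k : ℝ) / (2 * t ^ k)) * Real.log (1 - t ^ 2)) * t ^ k
      = -((k : ℝ) / 2) * Real.log (1 - t ^ 2) := by
    field_simp
  rw [h4] at h3
  linarith

/-- Each coordinate term is nonpositive, strictly if `q i ≠ 0`. -/
private lemma term_nonpos (k : ℕ) (hk0 : k ≠ 0) (lam : ℝ) (hlam0 : 0 ≤ lam)
    (hlam : lam < lambdaBar k) {t : ℝ} (ht : |t| < 1) :
    lam ^ 2 * |t| ^ k + (k : ℝ) / 2 * Real.log (1 - t ^ 2) ≤ 0 ∧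
    (t ≠ 0 → lam ^ 2 * |t| ^ k + (k : ℝ) / 2 * Real.log (1 - t ^ 2) < 0) := by
  have hsq : |t| ^ 2 = t ^ 2 := sq_abs t
  rcases eq_or_ne t 0 with h0 | h0
  · subst h0
    constructor
    · simp [abs_zero, zero_pow hk0, Real.log_one]
    · intro h; exact absurd rfl h
  · have ht0 : 0 < |t| := abs_pos.mpr h0
    have := key_term k lam hlam0 hlam ht0 ht
    rw [hsq] at this
    exact ⟨this.le, fun _ => this⟩

/-- The main real-valued bound. -/
private lemma main_bound (k : ℕ) (hk : 2 ≤ k) (lam : ℝ) (hlam0 : 0 ≤ lam)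
    (hlam : lam < lambdaBar k) (q : Fin k → ℝ) (hq : ∀ i, 0 < 1 - q i ^ 2) :
    lam ^ 2 * ∏ i, q i + 1 / 2 * ∑ i, Real.log (1 - q i ^ 2) ≤
      (1 / (k : ℝ)) * ∑ i, (lam ^ 2 * |q i| ^ k + (k : ℝ) / 2 * Real.log (1 - q i ^ 2)) := by
  have hk0 : (k : ℝ) ≠ 0 := by positivity
  -- AM-GM
  have hAM : ∏ i, q i ≤ (1 / (k : ℝ)) * ∑ i, |q i| ^ k := by
    have hgm := Real.geom_mean_le_arith_mean_weighted Finset.univ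
      (fun _ : Fin k => 1 / (k : ℝ)) (fun i => |q i| ^ k)
      (fun i _ => by positivity)
      (by simp [Finset.sum_const, Finset.card_univ]; field_simp)
      (fun i _ => by positivity)
    have hrw : ∀ i : Fin k, (|q i| ^ k) ^ ((1 : ℝ) / (k : ℝ)) = |q i| := by
      intro i
      rw [← Real.rpow_natCast |q i| k, ← Real.rpow_mul (abs_nonneg _)]
      rw [mul_one_div, div_self hk0, Real.rpow_one]
    calc ∏ i, q i ≤ |∏ i, q i| := le_abs_self _
      _ = ∏ i, |q i| := Finset.abs_prod _ _
      _ = ∏ i, (|q i| ^ k) ^ ((1 : ℝ) / (k : ℝ)) := by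
          exact Finset.prod_congr rfl fun i _ => (hrw i).symm
      _ ≤ ∑ i, (1 / (k : ℝ)) * |q i| ^ k := hgm
      _ = (1 / (k : ℝ)) * ∑ i, |q i| ^ k := by rw [Finset.mul_sum]
  have h1 : lam ^ 2 * ∏ i, q i ≤ lam ^ 2 * ((1 / (k : ℝ)) * ∑ i, |q i| ^ k) :=
    mul_le_mul_of_nonneg_left hAM (by positivity)
  have h2 : (1 / (k : ℝ)) * ∑ i, (lam ^ 2 * |q i| ^ k + (k : ℝ) / 2 * Real.log (1 - q i ^ 2))
      = lam ^ 2 * ((1 / (k : ℝ)) * ∑ i, |q i| ^ k) + 1 / 2 * ∑ i, Real.log (1 - q i ^ 2) := by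
    rw [Finset.sum_add_distrib, mul_add, ← Finset.mul_sum, ← Finset.mul_sum]
    field_simp
  rw [h2]
  linarith

/-- for `0 ≤ λ < λ̄_k`, the maximum of `G_λ` over `[−1,1]^k` equals `0` and is
attained uniquely at `q = 0`. -/
theorem Gasym_max_at_zero
    (k : ℕ) (hk : 2 ≤ k) (lam : ℝ) (hlam0 : 0 ≤ lam) (hlam : lam < lambdaBar k) :
    (∀ q : Fin k → ℝ, (∀ i, q i ∈ Set.Icc (-1 : ℝ) 1) → Gasym k lam q ≤ 0) ∧
    Gasym k lam 0 = 0 ∧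
    (∀ q : Fin k → ℝ, (∀ i, q i ∈ Set.Icc (-1 : ℝ) 1) → Gasym k lam q = 0 → q = 0) := by
  classical
  have hk0 : k ≠ 0 := by omega
  have hkR : (0:ℝ) < (k : ℝ) := by positivity
  have habs : ∀ (q : Fin k → ℝ), (∀ i, 0 < 1 - q i ^ 2) → ∀ i, |q i| < 1 := by
    intro q hq i
    have := hq i
    rw [abs_lt]
    constructor <;> nlinarith
  refine ⟨?_, ?_, ?_⟩
  · intro q hq
    unfold Gasym
    split_ifs with h
    · have hb := main_bound k hk lam hlam0 hlam q h
      have hsum : ∑ i, (lam ^ 2 * |q i| ^ k + (k : ℝ) / 2 * Real.log (1 - q i ^ 2)) ≤ 0 :=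
        Finset.sum_nonpos fun i _ => (term_nonpos k (by omega) lam hlam0 hlam (habs q h i)).1
      have : lam ^ 2 * ∏ i, q i + 1 / 2 * ∑ i, Real.log (1 - q i ^ 2) ≤ 0 := by
        calc _ ≤ (1 / (k:ℝ)) * ∑ i, (lam ^ 2 * |q i| ^ k + (k : ℝ) / 2 * Real.log (1 - q i ^ 2)) := hb
          _ ≤ 0 := mul_nonpos_of_nonneg_of_nonpos (by positivity) hsum
      exact_mod_cast this
    · exact bot_le
  · unfold Gasym
    rw [if_pos (by intro i; simp)]
    norm_num [Finset.prod_const, zero_pow hk0]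
  · intro q hq hG
    unfold Gasym at hG
    split_ifs at hG with h
    · have hGr : lam ^ 2 * ∏ i, q i + 1 / 2 * ∑ i, Real.log (1 - q i ^ 2) = 0 := by
        exact_mod_cast hG
      have hb := main_bound k hk lam hlam0 hlam q h
      rw [hGr] at hb
      have hsum_nonpos : ∀ i ∈ Finset.univ,
          lam ^ 2 * |q i| ^ k + (k : ℝ) / 2 * Real.log (1 - q i ^ 2) ≤ 0 :=
        fun i _ => (term_nonpos k (by omega) lam hlam0 hlam (habs q h i)).1
      have hsum : ∑ i, (lam ^ 2 * |q i| ^ k + (k : ℝ) / 2 * Real.log (1 - q i ^ 2)) = 0 := by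
        have hle : ∑ i, (lam ^ 2 * |q i| ^ k + (k : ℝ) / 2 * Real.log (1 - q i ^ 2)) ≤ 0 :=
          Finset.sum_nonpos hsum_nonpos
        have hge : 0 ≤ ∑ i, (lam ^ 2 * |q i| ^ k + (k : ℝ) / 2 * Real.log (1 - q i ^ 2)) := by
          by_contra hneg
          push_neg at hneg
          have : (1 / (k:ℝ)) * ∑ i, (lam ^ 2 * |q i| ^ k + (k : ℝ) / 2 * Real.log (1 - q i ^ 2)) < 0 :=
            mul_neg_of_pos_of_neg (by positivity) hneg
          linarith
        linarith
      funext i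
      by_contra hne
      have hstrict := (term_nonpos k (by omega) lam hlam0 hlam (habs q h i)).2 (by simpa using hne)
      have hlt : ∑ j, (lam ^ 2 * |q j| ^ k + (k : ℝ) / 2 * Real.log (1 - q j ^ 2)) <
          ∑ _j : Fin k, (0 : ℝ) :=
        Finset.sum_lt_sum hsum_nonpos ⟨i, Finset.mem_univ i, hstrict⟩
      rw [Finset.sum_const, smul_zero] at hlt
      linarith
    · exact absurd hG (by simp)

end
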